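/- Let (X, 𝒜) be a measurable space, μ a measure on X, c : Set X → [0,∞] a monotone set function (A ⊆ B implies c(A) ≤ c(B)), m ≥ 1 an integer, and φ : X → ℝ a measurable function with φ(x) < 0 for every x ∈ X. Assume that for every measurable set A ⊆ X and every real t > 0 one has μ(A ∩ {x : −φ(x) < t}) ≤ t^m · c(A). Then for every measurable set K ⊆ X, μ(K) ≤ m·4^m · ∫₀^∞ s^{m−1} c(K ∩ {x : φ(x) ≤ −s}) ds, where the integrand s ↦ c(K ∩ {φ ≤ −s}) is antitone in s (hence measurable) and the integral is the Lebesgue integral over (0, ∞). -/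

import Mathlib

open MeasureTheory Set

/-- Abstract form of the key estimate in the proof of Proposition 8: if the measure of
`A ∩ {-φ < t}` is dominated by `t^m c(A)` for every measurable `A` and `t > 0`, then
`μ(K) ≤ m 4^m ∫₀^∞ s^{m-1} c(K ∩ {φ ≤ -s}) ds`. -/
theorem stmt2 {X : Type*} [MeasurableSpace X] (μ : Measure X)
    (c : Set X → ENNReal) (hc : ∀ A B : Set X, A ⊆ B → c A ≤ c B)
    (m : ℕ) (hm : 1 ≤ m) (φ : X → ℝ) (hφmeas : Measurable φ) (hφneg : ∀ x, φ x < 0)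
    (hdom : ∀ A : Set X, MeasurableSet A → ∀ t : ℝ, 0 < t →
      μ (A ∩ {x | -φ x < t}) ≤ ENNReal.ofReal (t ^ m) * c A)
    (K : Set X) (hK : MeasurableSet K) :
    μ K ≤ (m : ENNReal) * 4 ^ m *
      ∫⁻ s in Ioi (0 : ℝ), ENNReal.ofReal (s ^ (m - 1)) * c (K ∩ {x | φ x ≤ -s}) := by
  classical
  set f : ℝ → ENNReal := fun s => ENNReal.ofReal (s ^ (m - 1)) * c (K ∩ {x | φ x ≤ -s})
    with hf
  set I : ℤ → Set ℝ := fun k => Ioc ((2:ℝ) ^ (k - 2)) ((2:ℝ) ^ (k - 1)) with hI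
  have h2pos : ∀ k : ℤ, (0:ℝ) < 2 ^ k := fun k => zpow_pos (by norm_num) k
  set S : ℤ → Set X := fun k => K ∩ {x | (2:ℝ) ^ (k - 1) ≤ -φ x ∧ -φ x < 2 ^ k} with hS
  set ck : ℤ → ENNReal := fun k => c (K ∩ {x | φ x ≤ -(2:ℝ) ^ (k - 1)}) with hck
  -- K is covered by the dyadic slabs
  have hKsub : K ⊆ ⋃ k : ℤ, S k := by
    intro x hx
    obtain ⟨n, hn1, hn2⟩ := exists_mem_Ico_zpow (x := -φ x) (y := (2:ℝ))
      (by linarith [hφneg x]) one_lt_two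
    refine mem_iUnion.2 ⟨n + 1, hx, ?_, ?_⟩
    · simpa using hn1
    · simpa using hn2
  -- measure of each slab
  have hSk : ∀ k : ℤ, μ (S k) ≤ ENNReal.ofReal (((2:ℝ) ^ k) ^ m) * ck k := by
    intro k
    have hA : MeasurableSet (K ∩ {x | φ x ≤ -(2:ℝ) ^ (k - 1)}) :=
      hK.inter (measurableSet_le hφmeas measurable_const)
    refine le_trans (measure_mono ?_) (hdom _ hA _ (h2pos k))
    rintro x ⟨hxK, h1, h2⟩
    exact ⟨⟨hxK, by simp only [mem_setOf_eq]; linarith⟩, h2⟩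
  -- lower bound for the integral over each dyadic interval
  have hInt : ∀ k : ℤ,
      ENNReal.ofReal (((2:ℝ) ^ (k - 2)) ^ m) * ck k ≤ ∫⁻ s in I k, f s := by
    intro k
    set a : ℝ := (2:ℝ) ^ (k - 2) with ha
    have hapos : 0 < a := h2pos _
    have hsub : ∀ s ∈ I k, ENNReal.ofReal (a ^ (m - 1)) * ck k ≤ f s := by
      intro s hs
      obtain ⟨hs1, hs2⟩ := hs
      refine mul_le_mul' (ENNReal.ofReal_le_ofReal ?_) (hc _ _ ?_)
      · exact pow_le_pow_left₀ hapos.le hs1.le _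
      · intro x hx
        refine ⟨hx.1, ?_⟩
        have h2 := hx.2
        simp only [mem_setOf_eq] at h2 ⊢
        linarith
    have hvol : volume (I k) = ENNReal.ofReal a := by
      have : (2:ℝ) ^ (k - 1) - a = a := by
        have : (2:ℝ) ^ (k - 1) = a * 2 := by
          rw [ha, show k - 1 = k - 2 + 1 by omega, zpow_add_one₀ (by norm_num : (2:ℝ) ≠ 0)]
        linarith
      rw [hI]
      simp [Real.volume_Ioc, this]
      rw [← ha, this]
    calc ENNReal.ofReal (a ^ m) * ck k
        = (ENNReal.ofReal (a ^ (m - 1)) * ck k) * volume (I k) := by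
          rw [hvol, ← pow_sub_one_mul (by omega : m ≠ 0) a,
            ENNReal.ofReal_mul (by positivity)]
          ring
      _ = ∫⁻ _ in I k, (ENNReal.ofReal (a ^ (m - 1)) * ck k) := by
          rw [setLIntegral_const]
      _ ≤ ∫⁻ s in I k, f s := setLIntegral_mono' measurableSet_Ioc hsub
  -- slab measure vs integral over the dyadic interval
  have hkey : ∀ k : ℤ, μ (S k) ≤ (m : ENNReal) * 4 ^ m * ∫⁻ s in I k, f s := by
    intro k
    refine le_trans (hSk k) ?_
    have h4 : ((2:ℝ) ^ k) ^ m = 4 ^ m * ((2:ℝ) ^ (k - 2)) ^ m := by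
      rw [← mul_pow]
      rw [show (4:ℝ) = 2 ^ (2:ℤ) by norm_num,
        ← zpow_add₀ (by norm_num : (2:ℝ) ≠ 0), show (2:ℤ) + (k - 2) = k by omega]
    have : ENNReal.ofReal (((2:ℝ) ^ k) ^ m) =
        4 ^ m * ENNReal.ofReal (((2:ℝ) ^ (k - 2)) ^ m) := by
      rw [h4, ENNReal.ofReal_mul (by positivity)]
      congr 1
      rw [ENNReal.ofReal_pow (by norm_num)]
      norm_num
    rw [this]
    calc 4 ^ m * ENNReal.ofReal (((2:ℝ) ^ (k - 2)) ^ m) * ck k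
        ≤ (m : ENNReal) * 4 ^ m * (ENNReal.ofReal (((2:ℝ) ^ (k - 2)) ^ m) * ck k) := by
          rw [mul_assoc]
          refine mul_le_mul' ?_ le_rfl
          calc (4:ENNReal) ^ m = 1 * 4 ^ m := (one_mul _).symm
            _ ≤ (m : ENNReal) * 4 ^ m := by
                gcongr
                exact_mod_cast hm
      _ ≤ (m : ENNReal) * 4 ^ m * ∫⁻ s in I k, f s := mul_le_mul' le_rfl (hInt k)
  -- the dyadic intervals are pairwise disjoint
  have hdisj : Pairwise (Function.onFun Disjoint I) := by
    have key : ∀ j k : ℤ, j < k → Disjoint (I j) (I k) := by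
      intro j k hjk
      refine disjoint_of_subset (Ioc_subset_Iic_self) (Ioc_subset_Ioi_self.trans ?_)
        (Iic_disjoint_Ioi (zpow_le_zpow_right₀ one_le_two (by omega : j - 1 ≤ k - 2)))
      exact le_rfl.subset
    intro j k hjk
    rcases hjk.lt_or_gt with h | h
    · exact key j k h
    · exact (key k j h).symm
  have hUsub : (⋃ k : ℤ, I k) ⊆ Ioi (0:ℝ) := by
    refine iUnion_subset fun k s hs => ?_
    exact lt_trans (h2pos _) hs.1
  calc μ K ≤ μ (⋃ k : ℤ, S k) := measure_mono hKsub
    _ ≤ ∑' k : ℤ, μ (S k) := measure_iUnion_le _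
    _ ≤ ∑' k : ℤ, (m : ENNReal) * 4 ^ m * ∫⁻ s in I k, f s := ENNReal.tsum_le_tsum hkey
    _ = (m : ENNReal) * 4 ^ m * ∑' k : ℤ, ∫⁻ s in I k, f s := ENNReal.tsum_mul_left
    _ = (m : ENNReal) * 4 ^ m * ∫⁻ s in ⋃ k : ℤ, I k, f s := by
        rw [lintegral_iUnion (fun k => measurableSet_Ioc) hdisj]
    _ ≤ (m : ENNReal) * 4 ^ m * ∫⁻ s in Ioi (0:ℝ), f s :=
        mul_le_mul' le_rfl (lintegral_mono_set hUsub)
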